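/- For every natural number n, ∑_{k=0}^{n} C(n,k) (-1)^k h_k/(k+1) = -h_n/(n+1), where h_k is the k-th harmonic number (h_0 = 0). -/

import Mathlib

/-- The `n`-th harmonic number. -/
noncomputable def harm (n : ℕ) : ℝ := ∑ j ∈ Finset.range n, 1 / (j + 1 : ℝ)

open Finset

lemma harm_zero : harm 0 = 0 := by simp [harm]

lemma harm_succ (n : ℕ) : harm (n + 1) = harm n + 1 / (n + 1 : ℝ) := by
  simp [harm, Finset.sum_range_succ]

lemma partial_alt (m j : ℕ) :
    ∑ k ∈ range (j + 1), (-1 : ℝ) ^ k * ((m + 1).choose k : ℝ)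
      = (-1) ^ j * (m.choose j : ℝ) := by
  induction j with
  | zero => simp
  | succ j ih =>
      rw [Finset.sum_range_succ, ih, Nat.choose_succ_succ m j]
      push_cast
      ring

lemma alt_succ (n : ℕ) :
    ∑ k ∈ range (n + 1), (-1 : ℝ) ^ k * ((n + 1).choose (k + 1) : ℝ) = 1 := by
  have h := partial_alt n (n + 1)
  rw [Nat.choose_succ_self, Finset.sum_range_succ'] at h
  have h2 : ∑ k ∈ range (n + 1), (-1 : ℝ) ^ (k + 1) * ((n + 1).choose (k + 1) : ℝ)
      = -∑ k ∈ range (n + 1), (-1 : ℝ) ^ k * ((n + 1).choose (k + 1) : ℝ) := by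
    rw [← Finset.sum_neg_distrib]
    exact Finset.sum_congr rfl fun k _ => by ring
  rw [h2] at h
  simp at h
  linarith

lemma key_div (n k : ℕ) :
    ((n.choose k : ℝ)) / (k + 1) = ((n + 1).choose (k + 1) : ℝ) / (n + 1) := by
  have h := Nat.add_one_mul_choose_eq n k
  have h' : ((n : ℝ) + 1) * (n.choose k : ℝ)
      = ((n + 1).choose (k + 1) : ℝ) * ((k : ℝ) + 1) := by exact_mod_cast h
  have hk : (k : ℝ) + 1 ≠ 0 := by positivity
  have hn : (n : ℝ) + 1 ≠ 0 := by positivity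
  field_simp
  linarith [h']

lemma L1 (n : ℕ) :
    ∑ k ∈ range (n + 1), (-1 : ℝ) ^ k * (n.choose k : ℝ) / (k + 1) = 1 / (n + 1) := by
  have h : ∀ k ∈ range (n + 1), (-1 : ℝ) ^ k * (n.choose k : ℝ) / (k + 1)
      = (-1) ^ k * ((n + 1).choose (k + 1) : ℝ) / (n + 1) := by
    intro k _
    rw [mul_div_assoc, key_div, mul_div_assoc]
  rw [Finset.sum_congr rfl h, ← Finset.sum_div, alt_succ]

lemma L2 (n : ℕ) :
    ∑ k ∈ range n, (-1 : ℝ) ^ k * (n.choose (k + 1) : ℝ) / (k + 1) = harm n := by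
  induction n with
  | zero => simp [harm]
  | succ n ih =>
      have split : ∀ k ∈ range (n + 1),
          (-1 : ℝ) ^ k * ((n + 1).choose (k + 1) : ℝ) / (k + 1)
            = (-1) ^ k * (n.choose (k + 1) : ℝ) / (k + 1)
              + (-1) ^ k * (n.choose k : ℝ) / (k + 1) := by
        intro k _
        rw [Nat.choose_succ_succ]
        push_cast
        ring
      rw [Finset.sum_congr rfl split, Finset.sum_add_distrib, L1, harm_succ]
      congr 1
      rw [Finset.sum_range_succ, Nat.choose_succ_self]
      simpa using ih

lemma L3 (n : ℕ) :
    ∑ k ∈ range (n + 2), (-1 : ℝ) ^ k * ((n + 1).choose k : ℝ) * harm k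
      = -1 / (n + 1) := by
  induction n with
  | zero =>
      norm_num [Finset.sum_range_succ, harm_succ, harm_zero]
  | succ n ih =>
      set g : ℕ → ℝ := fun k => (-1 : ℝ) ^ k * ((n + 1).choose k : ℝ) * harm k with hg
      have hg0 : g 0 = 0 := by simp [hg, harm_zero]
      have hgtop : g (n + 2) = 0 := by
        simp [hg, Nat.choose_eq_zero_of_lt (by omega : n + 1 < n + 2)]
      have hS1 : ∑ k ∈ range (n + 2),
          (-1 : ℝ) ^ (k + 1) * ((n + 1).choose (k + 1) : ℝ) * harm (k + 1)
            = -1 / (n + 1) := by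
        have h3 := Finset.sum_range_succ' g (n + 2)
        have h4 := Finset.sum_range_succ g (n + 2)
        rw [hg0, add_zero] at h3
        rw [hgtop, add_zero, ih] at h4
        rw [← h3, h4]
      have hS2 : ∑ k ∈ range (n + 2),
          (-1 : ℝ) ^ (k + 1) * ((n + 1).choose k : ℝ) * harm (k + 1)
            = 1 / (n + 1) - 1 / (n + 2) := by
        have hterm : ∀ k ∈ range (n + 2),
            (-1 : ℝ) ^ (k + 1) * ((n + 1).choose k : ℝ) * harm (k + 1)
              = -g k - (-1 : ℝ) ^ k * ((n + 1).choose k : ℝ) / (k + 1) := by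
          intro k _
          rw [harm_succ, hg]
          field_simp
          ring
        rw [Finset.sum_congr rfl hterm, Finset.sum_sub_distrib]
        rw [Finset.sum_neg_distrib, ih, L1 (n + 1)]
        push_cast
        ring
      have hsplit : ∀ k ∈ range (n + 2),
          (-1 : ℝ) ^ (k + 1) * ((n + 2).choose (k + 1) : ℝ) * harm (k + 1)
            = (-1 : ℝ) ^ (k + 1) * ((n + 1).choose (k + 1) : ℝ) * harm (k + 1)
              + (-1 : ℝ) ^ (k + 1) * ((n + 1).choose k : ℝ) * harm (k + 1) := by
        intro k _
        rw [Nat.choose_succ_succ]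
        push_cast
        ring
      rw [Finset.sum_range_succ' _ (n + 2)]
      have h0 : ((-1 : ℝ) ^ 0 * ((n + 1 + 1).choose 0 : ℝ) * harm 0) = 0 := by
        simp [harm_zero]
      rw [h0, add_zero, Finset.sum_congr rfl hsplit, Finset.sum_add_distrib, hS1, hS2]
      push_cast
      ring

theorem binom_alt_harmonic_div_succ (n : ℕ) :
    ∑ k ∈ Finset.range (n + 1),
      (n.choose k : ℝ) * (-1) ^ k * harm k / (k + 1) = -harm n / (n + 1) := by
  have hterm : ∀ k ∈ range (n + 1),
      (n.choose k : ℝ) * (-1) ^ k * harm k / (k + 1)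
        = (-1 : ℝ) ^ k * ((n + 1).choose (k + 1) : ℝ) * harm k / (n + 1) := by
    intro k _
    calc (n.choose k : ℝ) * (-1) ^ k * harm k / (k + 1)
        = ((-1 : ℝ) ^ k * harm k) * ((n.choose k : ℝ) / (k + 1)) := by ring
      _ = ((-1 : ℝ) ^ k * harm k) * (((n + 1).choose (k + 1) : ℝ) / (n + 1)) := by
          rw [key_div]
      _ = (-1 : ℝ) ^ k * ((n + 1).choose (k + 1) : ℝ) * harm k / (n + 1) := by ring
  rw [Finset.sum_congr rfl hterm, ← Finset.sum_div]
  have hU : ∑ k ∈ range (n + 1),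
      (-1 : ℝ) ^ k * ((n + 1).choose (k + 1) : ℝ) * harm (k + 1) = -(-1 / (n + 1)) := by
    set g : ℕ → ℝ := fun k => (-1 : ℝ) ^ k * ((n + 1).choose k : ℝ) * harm k with hg
    have hg0 : g 0 = 0 := by simp [hg, harm_zero]
    have h3 := Finset.sum_range_succ' g (n + 1)
    rw [hg0, add_zero, L3 n] at h3
    have : ∑ k ∈ range (n + 1), g (k + 1)
        = -∑ k ∈ range (n + 1),
            (-1 : ℝ) ^ k * ((n + 1).choose (k + 1) : ℝ) * harm (k + 1) := by
      rw [← Finset.sum_neg_distrib]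
      exact Finset.sum_congr rfl fun k _ => by simp [hg]; ring
    rw [this] at h3
    linarith
  have hV := L2 (n + 1)
  have hT : ∑ k ∈ range (n + 1),
      (-1 : ℝ) ^ k * ((n + 1).choose (k + 1) : ℝ) * harm k = -harm n := by
    have hterm2 : ∀ k ∈ range (n + 1),
        (-1 : ℝ) ^ k * ((n + 1).choose (k + 1) : ℝ) * harm k
          = (-1 : ℝ) ^ k * ((n + 1).choose (k + 1) : ℝ) * harm (k + 1)
            - (-1 : ℝ) ^ k * ((n + 1).choose (k + 1) : ℝ) / (k + 1) := by
      intro k _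
      rw [harm_succ]
      field_simp
      ring
    rw [Finset.sum_congr rfl hterm2, Finset.sum_sub_distrib, hU, hV, harm_succ]
    ring
  rw [hT]
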